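/- Define α(u,v) = (3u − |v|)/(6u²) for nonzero integers u,v with u ≥ |v| and gcd(u,v)=1. Then α is injective up to sign of v: if α(u₁,v₁) = α(u₂,v₂) for two such pairs, then u₁ = u₂ and |v₁| = |v₂|. -/

import Mathlib

theorem stmt_8 (u₁ v₁ u₂ v₂ : ℤ)
    (h₁ : 1 ≤ |v₁|) (h₁' : |v₁| ≤ u₁) (hg₁ : IsCoprime u₁ v₁)
    (h₂ : 1 ≤ |v₂|) (h₂' : |v₂| ≤ u₂) (hg₂ : IsCoprime u₂ v₂)
    (hα : (3 * (u₁ : ℚ) - |(v₁ : ℚ)|) / (6 * (u₁ : ℚ) ^ 2)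
        = (3 * (u₂ : ℚ) - |(v₂ : ℚ)|) / (6 * (u₂ : ℚ) ^ 2)) :
    u₁ = u₂ ∧ |v₁| = |v₂| := by
  set w₁ := |v₁| with hw₁
  set w₂ := |v₂| with hw₂
  have hu₁ : (1:ℤ) ≤ u₁ := h₁.trans h₁'
  have hu₂ : (1:ℤ) ≤ u₂ := h₂.trans h₂'
  have hu₁0 : u₁ ≠ 0 := by omega
  have hu₂0 : u₂ ≠ 0 := by omega
  -- coprimality with absolute values
  have hc₁ : IsCoprime u₁ w₁ := by
    rcases abs_choice v₁ with h | h
    · rw [hw₁, h]; exact hg₁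
    · rw [hw₁, h]; exact hg₁.neg_right
  have hc₂ : IsCoprime u₂ w₂ := by
    rcases abs_choice v₂ with h | h
    · rw [hw₂, h]; exact hg₂
    · rw [hw₂, h]; exact hg₂.neg_right
  -- integer cross-multiplied equation
  have habs₁ : |(v₁ : ℚ)| = ((w₁ : ℤ) : ℚ) := by rw [hw₁, Int.cast_abs]
  have habs₂ : |(v₂ : ℚ)| = ((w₂ : ℤ) : ℚ) := by rw [hw₂, Int.cast_abs]
  have hq₁ : ((u₁:ℚ)) ≠ 0 := Int.cast_ne_zero.mpr hu₁0
  have hq₂ : ((u₂:ℚ)) ≠ 0 := Int.cast_ne_zero.mpr hu₂0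
  rw [habs₁, habs₂, div_eq_div_iff (by positivity) (by positivity)] at hα
  have E : (3 * u₁ - w₁) * u₂ ^ 2 = (3 * u₂ - w₂) * u₁ ^ 2 := by
    have : ((3 * u₁ - w₁) * (6 * u₂ ^ 2) : ℚ) = ((3 * u₂ - w₂) * (6 * u₁ ^ 2) : ℚ) := by
      linear_combination hα
    have h6 : ((3 * u₁ - w₁) * (6 * u₂ ^ 2) : ℤ) = ((3 * u₂ - w₂) * (6 * u₁ ^ 2) : ℤ) := by
      exact_mod_cast this
    linarith
  -- gcd decomposition
  set g : ℤ := (Int.gcd u₁ u₂ : ℤ) with hg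
  have hpos : 0 < Int.gcd u₁ u₂ := Int.gcd_pos_of_ne_zero_left u₂ hu₁0
  have hg0 : 0 < g := by rw [hg]; exact_mod_cast hpos
  obtain ⟨a, ha⟩ : g ∣ u₁ := Int.gcd_dvd_left u₁ u₂
  obtain ⟨b, hb⟩ : g ∣ u₂ := Int.gcd_dvd_right u₁ u₂
  have ha0 : 0 < a := by nlinarith
  have hb0 : 0 < b := by nlinarith
  have hab : IsCoprime a b := by
    rw [Int.isCoprime_iff_gcd_eq_one]
    have hgcd : Int.gcd u₁ u₂ = g.natAbs * Int.gcd a b := by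
      rw [ha, hb, Int.gcd_mul_left]
    have hgna : g.natAbs = Int.gcd u₁ u₂ := by
      simp [hg]
    have h1 : g.natAbs = g.natAbs * Int.gcd a b := by
      rw [hgna] at hgcd ⊢; exact hgcd
    have h2 : g.natAbs * 1 = g.natAbs * Int.gcd a b := by rw [mul_one]; exact h1
    exact (mul_left_cancel₀ (by omega) h2).symm
  -- reduced equation
  have E' : (3 * g * a - w₁) * b ^ 2 = (3 * g * b - w₂) * a ^ 2 := by
    have : ((3 * g * a - w₁) * b ^ 2) * g ^ 2 = ((3 * g * b - w₂) * a ^ 2) * g ^ 2 := by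
      have := E
      rw [ha, hb] at this
      ring_nf at this ⊢
      linarith
    exact mul_right_cancel₀ (by positivity) this
  have key : ∀ x y wx wy : ℤ, IsCoprime x y → IsCoprime (g * x) wx →
      (3 * g * x - wx) * y ^ 2 = (3 * g * y - wy) * x ^ 2 → 0 < x → x = 1 := by
    intro x y wx wy hxy hcop heq hx0
    have hdvd : x ∣ wx * y ^ 2 := by
      have : wx * y ^ 2 = x * (3 * g * y ^ 2 - (3 * g * y - wy) * x) := by ring_nf; linarith [heq]
      exact ⟨_, this⟩
    have hdw : x ∣ wx := (hxy.pow_right).dvd_of_dvd_mul_right hdvd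
    have hcx : IsCoprime x wx := hcop.of_isCoprime_of_dvd_left ⟨g, by ring⟩
    have : IsUnit x := hcx.isUnit_of_dvd' dvd_rfl hdw
    rcases Int.isUnit_iff.mp this with h | h
    · exact h
    · omega
  have hA : a = 1 := key a b w₁ w₂ hab (by rwa [← ha]) E' ha0
  have hB : b = 1 := key b a w₂ w₁ hab.symm (by rwa [← hb]) E'.symm hb0
  have huu : u₁ = u₂ := by rw [ha, hb, hA, hB]
  refine ⟨huu, ?_⟩
  rw [huu] at E
  have : w₁ * u₂ ^ 2 = w₂ * u₂ ^ 2 := by linarith [E]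
  have := mul_right_cancel₀ (pow_ne_zero 2 hu₂0) this
  omega
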